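/- Let (Ω, ℱ, P) be an atomless probability space and X, Y ∈ L¹(Ω, ℱ, P). Then dist(X, A₂(Y)) ≥ sup_{p ∈ [0,1]} (F^{(−2)}_Y(p) − F^{(−2)}_X(p)) and also dist(X, A₂(Y)) ≥ sup_{η ∈ ℝ} (F^{(2)}_X(η) − F^{(2)}_Y(η)). -/

import Mathlib

open MeasureTheory Filter Set

noncomputable section

/-- Distribution function `F_Z(η) = P(Z ≤ η)`. -/
def cdfRV {Ω : Type*} [MeasurableSpace Ω] (P : Measure Ω) (Z : Ω → ℝ) (η : ℝ) : ℝ :=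
  (P {ω | Z ω ≤ η}).toReal

/-- Quantile function `F⁻¹_Z(p) = inf {η | F_Z(η) ≥ p}`. -/
def qf {Ω : Type*} [MeasurableSpace Ω] (P : Measure Ω) (Z : Ω → ℝ) (p : ℝ) : ℝ :=
  sInf {η : ℝ | p ≤ cdfRV P Z η}

/-- Absolute Lorenz function `F^{(-2)}_Z(p) = ∫₀^p F⁻¹_Z(t) dt`. -/
def lorenz {Ω : Type*} [MeasurableSpace Ω] (P : Measure Ω) (Z : Ω → ℝ) (p : ℝ) : ℝ :=
  ∫ t in (0:ℝ)..p, qf P Z t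

/-- Shortfall function `F^{(2)}_Z(η) = E[max(η - Z, 0)]`. -/
def shortfall {Ω : Type*} [MeasurableSpace Ω] (P : Measure Ω) (Z : Ω → ℝ) (η : ℝ) : ℝ :=
  ∫ ω, max (η - Z ω) 0 ∂P

/-- Second-order stochastic dominance. -/
def SSD {Ω : Type*} [MeasurableSpace Ω] (P : Measure Ω) (Z Y : Ω → ℝ) : Prop :=
  ∀ η : ℝ, shortfall P Z η ≤ shortfall P Y η

/-- First-order Wasserstein distance. -/
def W1 {Ω : Type*} [MeasurableSpace Ω] (P : Measure Ω) (X Z : Ω → ℝ) : ℝ :=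
  ∫ p in (0:ℝ)..1, |qf P X p - qf P Z p|

/-- Distance from `X` to the set `A₂(Y)` of integrable random variables dominating `Y`
in the second order, in terms of `W₁`. -/
def distA2 {Ω : Type*} [MeasurableSpace Ω] (P : Measure Ω) (X Y : Ω → ℝ) : ℝ :=
  sInf {d : ℝ | ∃ Z : Ω → ℝ, Integrable Z P ∧ SSD P Z Y ∧ d = W1 P X Z}

/-- An atomless probability space. -/
def Atomless {Ω : Type*} [MeasurableSpace Ω] (P : Measure Ω) : Prop :=
  ∀ s : Set Ω, MeasurableSet s → P s ≠ 0 →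
    ∃ t : Set Ω, t ⊆ s ∧ MeasurableSet t ∧ 0 < P t ∧ P t < P s

/-- `r`-th order shortfall transform `F^{(r)}_Z(η) = (1/Γ(r)) E[max(η-Z,0)^{r-1}]`,
with the convention `max(η-z,0)^0 = 𝟙_{z ≤ η}`. -/
def sfr {Ω : Type*} [MeasurableSpace Ω] (P : Measure Ω) (Z : Ω → ℝ) (r η : ℝ) : ℝ :=
  (1 / Real.Gamma r) * ∫ ω, (if Z ω ≤ η then (η - Z ω) ^ (r - 1) else 0) ∂P

/-- `r`-th order stochastic dominance: `Z ≽_{(r)} Y`. -/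
def domR {Ω : Type*} [MeasurableSpace Ω] (P : Measure Ω) (Z Y : Ω → ℝ) (r : ℝ) : Prop :=
  ∀ η : ℝ, sfr P Z r η ≤ sfr P Y r η


/-! ### Auxiliary material: inverse-transform sampling and quantile representations -/

namespace Stmt7Aux

open ProbabilityTheory Topology

set_option linter.unusedSectionVars false

/-- Quantile function of a measure on `ℝ`. -/
def QF (μ : Measure ℝ) (p : ℝ) : ℝ := sInf {x | p ≤ cdf μ x}

variable {μ : Measure ℝ} [IsProbabilityMeasure μ]

lemma QF_nonempty {p : ℝ} (hp : p < 1) : {x | p ≤ cdf μ x}.Nonempty :=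
  ((tendsto_cdf_atTop μ).eventually (eventually_ge_nhds hp)).exists

lemma QF_bddBelow {p : ℝ} (hp : 0 < p) : BddBelow {x | p ≤ cdf μ x} := by
  obtain ⟨y, hy⟩ := ((tendsto_cdf_atBot μ).eventually (eventually_lt_nhds hp)).exists
  exact ⟨y, fun x hx => le_of_not_gt fun hxy =>
    absurd (hx.trans ((monotone_cdf μ) hxy.le)) (not_le.2 hy)⟩

lemma QF_le_iff {p x : ℝ} (hp0 : 0 < p) (hp1 : p < 1) :
    QF μ p ≤ x ↔ p ≤ cdf μ x := by
  constructor
  · intro h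
    have key : ∀ z, x < z → p ≤ cdf μ z := by
      intro z hz
      obtain ⟨y, hy, hyz⟩ := exists_lt_of_csInf_lt (QF_nonempty hp1) (lt_of_le_of_lt h hz)
      exact hy.trans ((monotone_cdf μ) hyz.le)
    have hc : ContinuousWithinAt (cdf μ) (Ioi x) x :=
      ((cdf μ).right_continuous x).mono Ioi_subset_Ici_self
    have hc' : Tendsto (cdf μ) (𝓝[>] x) (𝓝 (cdf μ x)) := hc
    exact ge_of_tendsto hc'
      (eventually_mem_nhdsWithin.mono fun z hz => key z hz)
  · intro h
    exact csInf_le (QF_bddBelow hp0) h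

lemma QF_monoOn : MonotoneOn (QF μ) (Ioo (0:ℝ) 1) := by
  intro p hp q hq hpq
  exact csInf_le_csInf (QF_bddBelow hp.1) (QF_nonempty hq.2)
    (fun x hx => le_trans hpq hx)

lemma QF_aemeasurable : AEMeasurable (QF μ) (volume.restrict (Ioo (0:ℝ) 1)) :=
  aemeasurable_restrict_of_monotoneOn measurableSet_Ioo QF_monoOn

instance : IsProbabilityMeasure (volume.restrict (Ioo (0:ℝ) 1)) := by
  constructor
  simp [Real.volume_Ioo]

lemma map_QF : (volume.restrict (Ioo (0:ℝ) 1)).map (QF μ) = μ := by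
  have hm : AEMeasurable (QF μ) (volume.restrict (Ioo (0:ℝ) 1)) := QF_aemeasurable
  have : IsProbabilityMeasure ((volume.restrict (Ioo (0:ℝ) 1)).map (QF μ)) :=
    Measure.isProbabilityMeasure_map hm
  refine Measure.ext_of_Iic _ _ (fun x => ?_)
  rw [Measure.map_apply_of_aemeasurable hm measurableSet_Iic,
    Measure.restrict_apply' measurableSet_Ioo]
  have hset : QF μ ⁻¹' Iic x ∩ Ioo 0 1 = Iic (cdf μ x) ∩ Ioo 0 1 := by
    ext t
    simp only [mem_inter_iff, mem_preimage, mem_Iic, mem_Ioo, and_congr_left_iff]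
    intro ht
    rw [QF_le_iff ht.1 ht.2]
  rw [hset, ← ofReal_cdf μ x]
  rcases le_or_gt 1 (cdf μ x) with h1 | h1
  · have : Iic (cdf μ x) ∩ Ioo (0:ℝ) 1 = Ioo 0 1 := by
      apply inter_eq_self_of_subset_right
      exact fun t ht => le_trans ht.2.le h1
    rw [this, Real.volume_Ioo]
    have h1' : cdf μ x = 1 := le_antisymm (cdf_le_one μ x) h1
    simp [h1']
  · have : Iic (cdf μ x) ∩ Ioo (0:ℝ) 1 = Ioc 0 (cdf μ x) := by
      ext t
      simp only [mem_inter_iff, mem_Iic, mem_Ioo, mem_Ioc]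
      constructor
      · rintro ⟨h, h0, _⟩; exact ⟨h0, h⟩
      · rintro ⟨h0, h⟩; exact ⟨h, h0, lt_of_le_of_lt h h1⟩
    rw [this, Real.volume_Ioc]
    simp

lemma integral_QF {f : ℝ → ℝ} (hf : AEStronglyMeasurable f μ) :
    ∫ t in Ioo (0:ℝ) 1, f (QF μ t) = ∫ x, f x ∂μ := by
  conv_rhs => rw [← map_QF (μ := μ)]
  rw [integral_map QF_aemeasurable (by rw [map_QF (μ := μ)]; exact hf)]

lemma integrable_QF {f : ℝ → ℝ} (hf : AEStronglyMeasurable f μ) (hi : Integrable f μ) :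
    Integrable (fun t => f (QF μ t)) (volume.restrict (Ioo (0:ℝ) 1)) :=
  (integrable_map_measure (by rw [map_QF (μ := μ)]; exact hf) QF_aemeasurable).mp
    (by rw [map_QF (μ := μ)]; exact hi)

section RV

variable {Ω : Type*} [MeasurableSpace Ω] {P : Measure Ω} [IsProbabilityMeasure P] {Z : Ω → ℝ}

lemma cdfRV_eq (hZ : AEMeasurable Z P) (η : ℝ) :
    cdfRV P Z η = cdf (P.map Z) η := by
  have : IsProbabilityMeasure (P.map Z) := Measure.isProbabilityMeasure_map hZ
  rw [cdf_eq_real, measureReal_def, cdfRV, Measure.map_apply_of_aemeasurable hZ measurableSet_Iic]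
  rfl

lemma qf_eq (hZ : AEMeasurable Z P) : qf P Z = QF (P.map Z) := by
  funext p
  unfold qf QF
  congr 1
  ext x
  simp only [mem_setOf_eq, cdfRV_eq hZ]

lemma qf_monoOn (hZ : AEMeasurable Z P) : MonotoneOn (qf P Z) (Ioo (0:ℝ) 1) := by
  have : IsProbabilityMeasure (P.map Z) := Measure.isProbabilityMeasure_map hZ
  rw [qf_eq hZ]
  exact QF_monoOn

lemma integral_comp_qf (hZ : Integrable Z P) {f : ℝ → ℝ} (hfc : Continuous f)
    (hfi : Integrable (fun ω => f (Z ω)) P) :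
    Integrable (fun t => f (qf P Z t)) (volume.restrict (Ioo (0:ℝ) 1)) ∧
    ∫ t in Ioo (0:ℝ) 1, f (qf P Z t) = ∫ ω, f (Z ω) ∂P := by
  have hZm : AEMeasurable Z P := hZ.aemeasurable
  have : IsProbabilityMeasure (P.map Z) := Measure.isProbabilityMeasure_map hZm
  have hf : AEStronglyMeasurable f (P.map Z) := hfc.aestronglyMeasurable
  have hfi' : Integrable f (P.map Z) := by
    rw [integrable_map_measure hf hZm]; exact hfi
  rw [qf_eq hZm]
  refine ⟨integrable_QF hf hfi', ?_⟩
  rw [integral_QF hf, integral_map hZm hf]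

lemma qf_integrable (hZ : Integrable Z P) :
    Integrable (qf P Z) (volume.restrict (Ioo (0:ℝ) 1)) :=
  (integral_comp_qf hZ continuous_id hZ).1

/-- Quantile representation of the shortfall function. -/
lemma shortfall_rep (hZ : Integrable Z P) (η : ℝ) :
    Integrable (fun t => max (η - qf P Z t) 0) (volume.restrict (Ioo (0:ℝ) 1)) ∧
    shortfall P Z η = ∫ t in Ioo (0:ℝ) 1, max (η - qf P Z t) 0 := by
  have hfc : Continuous (fun z : ℝ => max (η - z) 0) :=
    (continuous_const.sub continuous_id).max continuous_const
  have hfi : Integrable (fun ω => max (η - Z ω) 0) P := ((integrable_const η).sub hZ).pos_part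
  obtain ⟨h1, h2⟩ := integral_comp_qf hZ hfc hfi
  exact ⟨h1, h2.symm⟩

lemma lorenz_eq_setIntegral (Z : Ω → ℝ) {p : ℝ} (hp : 0 ≤ p) :
    lorenz P Z p = ∫ t in Ioo (0:ℝ) p, qf P Z t := by
  rw [lorenz, intervalIntegral.integral_of_le hp, integral_Ioc_eq_integral_Ioo]

lemma restrict_mono_Ioo {p : ℝ} (hp : p ≤ 1) :
    (volume.restrict (Ioo (0:ℝ) p)) ≤ (volume.restrict (Ioo (0:ℝ) 1)) :=
  Measure.restrict_mono (Ioo_subset_Ioo le_rfl hp) le_rfl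

lemma const_integrable (c : ℝ) (p : ℝ) :
    Integrable (fun _ : ℝ => c) (volume.restrict (Ioo (0:ℝ) p)) := by
  refine integrableOn_const ?_
  rw [Real.volume_Ioo]
  exact ENNReal.ofReal_ne_top

/-- Fenchel inequality: `p·η − F^{(2)}_Z(η) ≤ ∫₀ᵖ q_Z`. -/
lemma lorenz_ge (hZ : Integrable Z P) {p : ℝ} (hp : p ∈ Ioo (0:ℝ) 1) (η : ℝ) :
    p * η - shortfall P Z η ≤ ∫ t in Ioo (0:ℝ) p, qf P Z t := by
  obtain ⟨hint, hrep⟩ := shortfall_rep hZ η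
  have hmle := restrict_mono_Ioo hp.2.le
  have hint_p : Integrable (fun t => max (η - qf P Z t) 0) (volume.restrict (Ioo (0:ℝ) p)) :=
    hint.mono_measure hmle
  have hq_p : Integrable (qf P Z) (volume.restrict (Ioo (0:ℝ) p)) :=
    (qf_integrable hZ).mono_measure hmle
  have h1 : ∫ t in Ioo (0:ℝ) p, max (η - qf P Z t) 0 ≤ shortfall P Z η := by
    rw [hrep]
    refine setIntegral_mono_set hint ?_ ?_
    · filter_upwards with t using le_max_right _ _
    · exact HasSubset.Subset.eventuallyLE (Ioo_subset_Ioo le_rfl hp.2.le)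
  have h2 : ∫ t in Ioo (0:ℝ) p, (η - qf P Z t) ≤ ∫ t in Ioo (0:ℝ) p, max (η - qf P Z t) 0 :=
    integral_mono ((const_integrable η p).sub hq_p) hint_p (fun t => le_max_left _ _)
  have h3 : ∫ t in Ioo (0:ℝ) p, (η - qf P Z t)
      = p * η - ∫ t in Ioo (0:ℝ) p, qf P Z t := by
    rw [integral_sub (const_integrable η p) hq_p, setIntegral_const]
    rw [Real.volume_real_Ioo_of_le hp.1.le, sub_zero, smul_eq_mul]
  linarith

/-- Fenchel equality at the quantile: `∫₀ᵖ q_Z = p·q_Z(p) − F^{(2)}_Z(q_Z(p))`. -/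
lemma lorenz_fenchel (hZ : Integrable Z P) {p : ℝ} (hp : p ∈ Ioo (0:ℝ) 1) :
    ∫ t in Ioo (0:ℝ) p, qf P Z t = p * qf P Z p - shortfall P Z (qf P Z p) := by
  set η := qf P Z p with hη
  obtain ⟨hint, hrep⟩ := shortfall_rep hZ η
  have hmono := qf_monoOn hZ.aemeasurable
  have hmle := restrict_mono_Ioo hp.2.le
  have hq_p : Integrable (qf P Z) (volume.restrict (Ioo (0:ℝ) p)) :=
    (qf_integrable hZ).mono_measure hmle
  have heq : EqOn (fun t => max (η - qf P Z t) 0)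
      ((Ioo (0:ℝ) p).indicator (fun t => η - qf P Z t)) (Ioo (0:ℝ) 1) := by
    intro t ht
    by_cases h : t < p
    · have htp : t ∈ Ioo (0:ℝ) p := ⟨ht.1, h⟩
      have hle : qf P Z t ≤ η := hmono ht hp h.le
      simp only [indicator_of_mem htp]
      exact max_eq_left (sub_nonneg.2 hle)
    · have hle : η ≤ qf P Z t := hmono hp ht (not_lt.1 h)
      have : t ∉ Ioo (0:ℝ) p := fun hc => h hc.2
      simp only [indicator_of_notMem this]
      exact max_eq_right (sub_nonpos.2 hle)
  have hIoo : Ioo (0:ℝ) 1 ∩ Ioo (0:ℝ) p = Ioo (0:ℝ) p :=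
    inter_eq_self_of_subset_right (Ioo_subset_Ioo le_rfl hp.2.le)
  rw [hrep, setIntegral_congr_fun measurableSet_Ioo heq,
    setIntegral_indicator measurableSet_Ioo, hIoo,
    integral_sub (const_integrable η p) hq_p, setIntegral_const,
    Real.volume_real_Ioo_of_le hp.1.le, sub_zero, smul_eq_mul]
  ring

lemma lorenz_continuousOn (hZ : Integrable Z P) :
    ContinuousOn (lorenz P Z) (Icc (0:ℝ) 1) := by
  have h1 : IntegrableOn (qf P Z) (Icc (0:ℝ) 1) volume := by
    rw [integrableOn_Icc_iff_integrableOn_Ioo]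
    exact qf_integrable hZ
  have := intervalIntegral.continuousOn_primitive_interval
    (a := (0:ℝ)) (b := (1:ℝ)) (μ := volume) (f := qf P Z)
    (by rwa [uIcc_of_le zero_le_one])
  rwa [uIcc_of_le zero_le_one] at this


lemma key (X Y Z : Ω → ℝ) (hX : Integrable X P) (hY : Integrable Y P)
    (hZ : Integrable Z P) (hSSD : SSD P Z Y) :
    (∀ p ∈ Icc (0:ℝ) 1, lorenz P Y p - lorenz P X p ≤ W1 P X Z) ∧
    (∀ η : ℝ, shortfall P X η - shortfall P Y η ≤ W1 P X Z) := by
  have hqX := qf_integrable hX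
  have hqZ := qf_integrable hZ
  have habs : Integrable (fun t => |qf P X t - qf P Z t|) (volume.restrict (Ioo (0:ℝ) 1)) :=
    (hqX.sub hqZ).abs
  have hW1 : W1 P X Z = ∫ t in Ioo (0:ℝ) 1, |qf P X t - qf P Z t| := by
    rw [W1, intervalIntegral.integral_of_le zero_le_one, integral_Ioc_eq_integral_Ioo]
  constructor
  · -- Lorenz gap bound
    have hmid : ∀ p ∈ Ioo (0:ℝ) 1, lorenz P Y p ≤ lorenz P Z p := by
      intro p hp
      have e1 := lorenz_eq_setIntegral (P := P) Y hp.1.le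
      have e2 := lorenz_eq_setIntegral (P := P) Z hp.1.le
      have h1 := lorenz_fenchel hY hp
      have h2 := lorenz_ge hZ hp (qf P Y p)
      have h3 := hSSD (qf P Y p)
      rw [e1, e2, h1]
      linarith
    have hYZ : ∀ p ∈ Icc (0:ℝ) 1, lorenz P Y p ≤ lorenz P Z p := by
      intro p hp
      rcases eq_or_lt_of_le hp.1 with h0 | h0
      · rw [← h0]; simp [lorenz]
      rcases eq_or_lt_of_le hp.2 with h1 | h1
      · subst h1
        have hcY : Tendsto (lorenz P Y) (𝓝[Ioo (0:ℝ) 1] 1) (𝓝 (lorenz P Y 1)) :=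
          (lorenz_continuousOn hY 1 (right_mem_Icc.2 zero_le_one)).mono Ioo_subset_Icc_self
        have hcZ : Tendsto (lorenz P Z) (𝓝[Ioo (0:ℝ) 1] 1) (𝓝 (lorenz P Z 1)) :=
          (lorenz_continuousOn hZ 1 (right_mem_Icc.2 zero_le_one)).mono Ioo_subset_Icc_self
        have hnb : (𝓝[Ioo (0:ℝ) 1] (1:ℝ)).NeBot := by
          rw [nhdsWithin_Ioo_eq_nhdsLT zero_lt_one]
          infer_instance
        exact le_of_tendsto_of_tendsto hcY hcZ
          (eventually_mem_nhdsWithin.mono fun t ht => hmid t ht)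
      · exact hmid p ⟨h0, h1⟩
    intro p hp
    have hgap : lorenz P Z p - lorenz P X p ≤ W1 P X Z := by
      rw [lorenz_eq_setIntegral (P := P) Z hp.1, lorenz_eq_setIntegral (P := P) X hp.1, hW1]
      have hmle := restrict_mono_Ioo hp.2
      have hq_pX : Integrable (qf P X) (volume.restrict (Ioo (0:ℝ) p)) := hqX.mono_measure hmle
      have hq_pZ : Integrable (qf P Z) (volume.restrict (Ioo (0:ℝ) p)) := hqZ.mono_measure hmle
      have habs_p := habs.mono_measure hmle
      have step1 : (∫ t in Ioo (0:ℝ) p, qf P Z t) - ∫ t in Ioo (0:ℝ) p, qf P X t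
          ≤ ∫ t in Ioo (0:ℝ) p, |qf P X t - qf P Z t| := by
        rw [← integral_sub hq_pZ hq_pX]
        refine integral_mono (hq_pZ.sub hq_pX) habs_p (fun t => ?_)
        rw [abs_sub_comm]
        exact le_abs_self _
      have step2 : ∫ t in Ioo (0:ℝ) p, |qf P X t - qf P Z t|
          ≤ ∫ t in Ioo (0:ℝ) 1, |qf P X t - qf P Z t| := by
        refine setIntegral_mono_set habs ?_ ?_
        · filter_upwards with t using abs_nonneg _
        · exact HasSubset.Subset.eventuallyLE (Ioo_subset_Ioo le_rfl hp.2)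
      linarith
    have := hYZ p hp
    linarith
  · -- shortfall gap bound
    intro η
    obtain ⟨hiX, hrX⟩ := shortfall_rep hX η
    obtain ⟨hiZ, hrZ⟩ := shortfall_rep hZ η
    have h1 := hSSD η
    have h2 : shortfall P X η - shortfall P Z η ≤ W1 P X Z := by
      rw [hrX, hrZ, hW1, ← integral_sub hiX hiZ]
      refine integral_mono (hiX.sub hiZ) habs (fun t => ?_)
      have hab : qf P Z t - qf P X t ≤ |qf P X t - qf P Z t| := by
        rw [abs_sub_comm]; exact le_abs_self _
      have h0 : (0:ℝ) ≤ |qf P X t - qf P Z t| := abs_nonneg _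
      rcases max_cases (η - qf P X t) 0 with ⟨e1, l1⟩ | ⟨e1, l1⟩ <;>
        rcases max_cases (η - qf P Z t) 0 with ⟨e2, l2⟩ | ⟨e2, l2⟩ <;>
        simp only [e1, e2] <;> linarith
    linarith

end RV
end Stmt7Aux

/-- lower bounds for `dist(X, A₂(Y))` by the Lorenz-function gap and the
shortfall-function gap. -/
theorem stmt7 {Ω : Type*} [MeasurableSpace Ω] (P : Measure Ω) [IsProbabilityMeasure P]
    (hP : Atomless P) (X Y : Ω → ℝ) (hX : Integrable X P) (hY : Integrable Y P) :
    sSup ((fun p => lorenz P Y p - lorenz P X p) '' Set.Icc (0:ℝ) 1) ≤ distA2 P X Y ∧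
    sSup (Set.range fun η : ℝ => shortfall P X η - shortfall P Y η) ≤ distA2 P X Y := by
  have hSne : {d : ℝ | ∃ Z : Ω → ℝ, Integrable Z P ∧ SSD P Z Y ∧ d = W1 P X Z}.Nonempty :=
    ⟨W1 P X Y, Y, hY, fun η => le_rfl, rfl⟩
  have hd0 : ∀ d ∈ {d : ℝ | ∃ Z : Ω → ℝ, Integrable Z P ∧ SSD P Z Y ∧ d = W1 P X Z}, 0 ≤ d := by
    rintro d ⟨Z, hZ, hS, rfl⟩
    exact intervalIntegral.integral_nonneg zero_le_one (fun u _ => abs_nonneg _)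
  constructor
  · refine le_csInf hSne ?_
    rintro d ⟨Z, hZ, hS, rfl⟩
    refine Real.sSup_le ?_ (hd0 _ ⟨Z, hZ, hS, rfl⟩)
    rintro x ⟨p, hp, rfl⟩
    exact (Stmt7Aux.key X Y Z hX hY hZ hS).1 p hp
  · refine le_csInf hSne ?_
    rintro d ⟨Z, hZ, hS, rfl⟩
    refine Real.sSup_le ?_ (hd0 _ ⟨Z, hZ, hS, rfl⟩)
    rintro x ⟨η, rfl⟩
    exact (Stmt7Aux.key X Y Z hX hY hZ hS).2 η

end
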